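/- Consider F₁ : ℝ² → ℝ, F₁(v,w) = √(2v² + 2vw + 2w²) + v + w. For every v > 0, the function w ↦ F₁(v,w) attains its infimum over ℝ at the unique point w = −(1+√3)v/2 = v/(1−√3), and the minimum value equals (√3+1)v/2 = v/(√3−1). For every v < 0, it attains its infimum at the unique point w = (√3−1)v/2 = v/(1+√3), and the minimum value equals −(√3−1)v/2 = v/(−1−√3). -/

import Mathlib

/-- The Randers-type Minkowski norm F₁(v,w) = √(2v² + 2vw + 2w²) + v + w on ℝ². -/
noncomputable def Frand (v w : ℝ) : ℝ := Real.sqrt (2 * v ^ 2 + 2 * v * w + 2 * w ^ 2) + v + w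

lemma frand_aux (v w₀ m : ℝ)
    (hQ : ∀ w, 2 * v ^ 2 + 2 * v * w + 2 * w ^ 2 = (m - v - w) ^ 2 + (w - w₀) ^ 2)
    (hpos : 0 ≤ m - v - w₀) :
    Frand v w₀ = m ∧ (∀ w, Frand v w₀ ≤ Frand v w) ∧
      (∀ w, Frand v w = Frand v w₀ → w = w₀) := by
  have hval : Frand v w₀ = m := by
    unfold Frand
    have h1 : 2 * v ^ 2 + 2 * v * w₀ + 2 * w₀ ^ 2 = (m - v - w₀) ^ 2 := by
      have := hQ w₀; simpa using this
    rw [h1, Real.sqrt_sq hpos]; ring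
  refine ⟨hval, ?_, ?_⟩
  · intro w
    rw [hval]
    unfold Frand
    have hQnn : 0 ≤ 2 * v ^ 2 + 2 * v * w + 2 * w ^ 2 := by rw [hQ w]; positivity
    have hsq := Real.sq_sqrt hQnn
    have hnn := Real.sqrt_nonneg (2 * v ^ 2 + 2 * v * w + 2 * w ^ 2)
    have hQw := hQ w
    nlinarith [sq_nonneg (Real.sqrt (2 * v ^ 2 + 2 * v * w + 2 * w ^ 2) - (m - v - w)),
      sq_nonneg (Real.sqrt (2 * v ^ 2 + 2 * v * w + 2 * w ^ 2) + (m - v - w)),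
      sq_nonneg (w - w₀)]
  · intro w hw
    rw [hval] at hw
    unfold Frand at hw
    have hQnn : 0 ≤ 2 * v ^ 2 + 2 * v * w + 2 * w ^ 2 := by rw [hQ w]; positivity
    have hA : Real.sqrt (2 * v ^ 2 + 2 * v * w + 2 * w ^ 2) = m - v - w := by linarith
    have hsq := Real.sq_sqrt hQnn
    rw [hA] at hsq
    have hQw := hQ w
    have hB : (w - w₀) ^ 2 = 0 := by linarith
    have : w - w₀ = 0 := pow_eq_zero_iff (n := 2) (by norm_num) |>.mp hB
    linarith

theorem stmt_18 :
    (∀ v : ℝ, 0 < v →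
      (-(1 + Real.sqrt 3) * v / 2 = v / (1 - Real.sqrt 3)) ∧
      (∀ w : ℝ, Frand v (-(1 + Real.sqrt 3) * v / 2) ≤ Frand v w) ∧
      (∀ w : ℝ, Frand v w = Frand v (-(1 + Real.sqrt 3) * v / 2) →
        w = -(1 + Real.sqrt 3) * v / 2) ∧
      Frand v (-(1 + Real.sqrt 3) * v / 2) = (Real.sqrt 3 + 1) * v / 2 ∧
      (Real.sqrt 3 + 1) * v / 2 = v / (Real.sqrt 3 - 1)) ∧
    (∀ v : ℝ, v < 0 →
      ((Real.sqrt 3 - 1) * v / 2 = v / (1 + Real.sqrt 3)) ∧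
      (∀ w : ℝ, Frand v ((Real.sqrt 3 - 1) * v / 2) ≤ Frand v w) ∧
      (∀ w : ℝ, Frand v w = Frand v ((Real.sqrt 3 - 1) * v / 2) →
        w = (Real.sqrt 3 - 1) * v / 2) ∧
      Frand v ((Real.sqrt 3 - 1) * v / 2) = -(Real.sqrt 3 - 1) * v / 2 ∧
      (-(Real.sqrt 3 - 1) * v / 2 = v / (-1 - Real.sqrt 3))) := by
  have hs3 : Real.sqrt 3 ^ 2 = 3 := Real.sq_sqrt (by norm_num)
  have hs1 : 1 < Real.sqrt 3 := by nlinarith [Real.sqrt_nonneg 3]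
  constructor
  · intro v hv
    obtain ⟨hval, hmin, huniq⟩ := frand_aux v (-(1 + Real.sqrt 3) * v / 2)
      ((Real.sqrt 3 + 1) * v / 2)
      (fun w => by linear_combination (- v ^ 2 / 2) * hs3)
      (by nlinarith)
    refine ⟨?_, hmin, huniq, hval, ?_⟩
    · have h10 : 1 - Real.sqrt 3 ≠ 0 := by linarith
      field_simp
      linear_combination hs3
    · have h10 : Real.sqrt 3 - 1 ≠ 0 := by linarith
      field_simp
      linear_combination hs3
  · intro v hv
    obtain ⟨hval, hmin, huniq⟩ := frand_aux v ((Real.sqrt 3 - 1) * v / 2)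
      (-(Real.sqrt 3 - 1) * v / 2)
      (fun w => by linear_combination (- v ^ 2 / 2) * hs3)
      (by nlinarith)
    refine ⟨?_, hmin, huniq, hval, ?_⟩
    · have h10 : 1 + Real.sqrt 3 ≠ 0 := by positivity
      field_simp
      linear_combination v * hs3
    · have h10 : -1 - Real.sqrt 3 ≠ 0 := by nlinarith
      field_simp
      linear_combination v * hs3
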